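/- Let n ≥ 2 and ε > 0, and define ψ′ : {s ∈ ℝ^{n−1} : ‖s‖² > ε} × ℝ → ℝⁿ × ℝⁿ × ℝ (coordinates (x,y,z)) as follows: for 1 ≤ i ≤ n−1, the i-th coordinates are (xᵢ, yᵢ) = (sᵢ cos(πτ), −sᵢ sin(πτ)); the n-th coordinates are (xₙ, yₙ) = √((‖s‖² − ε)/2)·(cos(2πτ), sin(2πτ)); and z = επτ. Then the image of ψ′ is Legendrian for the standard contact form: for every (s,τ) with ‖s‖² > ε and every (v,σ) ∈ ℝ^{n−1} × ℝ, α_std(ψ′(s,τ))(Dψ′(s,τ)(v,σ)) = 0, where α_std(x,y,z)(ẋ,ẏ,ż) := ż + Σ_{i=1}^{n} (xᵢ ẏᵢ − yᵢ ẋᵢ). -/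

import Mathlib

open scoped RealInnerProductSpace

noncomputable section

set_option maxHeartbeats 1000000

private lemma hasFDerivAt_div_const' {E : Type*} [NormedAddCommGroup E] [NormedSpace ℝ E]
    {f : E → ℝ} {f' : E →L[ℝ] ℝ} {x : E} (h : HasFDerivAt f f' x) (c : ℝ) :
    HasFDerivAt (fun y => f y / c) (c⁻¹ • f') x := by
  simpa only [div_eq_inv_mul] using h.const_mul c⁻¹


/-- The smooth part of the boundary of the resolved navel of the bypass is Legendrian:
writing `n = m + 1` with `m ≥ 1` and fixing `ε > 0`, the map `ψ'(s,τ)` with coordinates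
`(xᵢ, yᵢ) = (sᵢ cos(πτ), −sᵢ sin(πτ))` for `i < m`,
`(xₘ, yₘ) = √((‖s‖² − ε)/2)(cos(2πτ), sin(2πτ))` and `z = επτ` satisfies
`α_std(ψ'(s,τ))(Dψ'(s,τ)(v,σ)) = 0` whenever `‖s‖² > ε`, where
`α_std(x,y,z)(ẋ,ẏ,ż) = ż + Σᵢ (xᵢẏᵢ − yᵢẋᵢ)`. -/
theorem statement_16 (m : ℕ) (hm : 1 ≤ m) (ε : ℝ) (hε : 0 < ε)
    (ψ : EuclideanSpace ℝ (Fin m) × ℝ →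
      EuclideanSpace ℝ (Fin (m + 1)) × EuclideanSpace ℝ (Fin (m + 1)) × ℝ)
    (hψx : ∀ (s : EuclideanSpace ℝ (Fin m)) (τ : ℝ) (i : Fin m),
      (ψ (s, τ)).1 (Fin.castSucc i) = s i * Real.cos (Real.pi * τ))
    (hψy : ∀ (s : EuclideanSpace ℝ (Fin m)) (τ : ℝ) (i : Fin m),
      (ψ (s, τ)).2.1 (Fin.castSucc i) = -(s i * Real.sin (Real.pi * τ)))
    (hψxn : ∀ (s : EuclideanSpace ℝ (Fin m)) (τ : ℝ),
      (ψ (s, τ)).1 (Fin.last m)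
        = Real.sqrt ((‖s‖ ^ 2 - ε) / 2) * Real.cos (2 * Real.pi * τ))
    (hψyn : ∀ (s : EuclideanSpace ℝ (Fin m)) (τ : ℝ),
      (ψ (s, τ)).2.1 (Fin.last m)
        = Real.sqrt ((‖s‖ ^ 2 - ε) / 2) * Real.sin (2 * Real.pi * τ))
    (hψz : ∀ (s : EuclideanSpace ℝ (Fin m)) (τ : ℝ),
      (ψ (s, τ)).2.2 = ε * Real.pi * τ) :
    ∀ (s : EuclideanSpace ℝ (Fin m)) (τ : ℝ), ‖s‖ ^ 2 > ε →
      ∀ (v : EuclideanSpace ℝ (Fin m)) (σ : ℝ),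
        (fderiv ℝ ψ (s, τ) (v, σ)).2.2
          + ∑ i : Fin (m + 1),
              ((ψ (s, τ)).1 i * (fderiv ℝ ψ (s, τ) (v, σ)).2.1 i
                - (ψ (s, τ)).2.1 i * (fderiv ℝ ψ (s, τ) (v, σ)).1 i) = 0 := by
  intro s τ hs v σ
  have h0 : 0 < (‖s‖ ^ 2 - ε) / 2 := div_pos (by linarith) two_pos
  have hne : (‖s‖ ^ 2 - ε) / 2 ≠ 0 := ne_of_gt h0
  -- building blocks
  have hsnd : HasFDerivAt (fun q : EuclideanSpace ℝ (Fin m) × ℝ => q.2)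
      (ContinuousLinearMap.snd ℝ (EuclideanSpace ℝ (Fin m)) ℝ) (s, τ) := hasFDerivAt_snd
  have hproj : ∀ i : Fin m, HasFDerivAt (fun q : EuclideanSpace ℝ (Fin m) × ℝ => q.1 i)
      ((EuclideanSpace.proj (𝕜 := ℝ) i).comp
        (ContinuousLinearMap.fst ℝ (EuclideanSpace ℝ (Fin m)) ℝ)) (s, τ) := fun i =>
    (EuclideanSpace.proj (𝕜 := ℝ) i).hasFDerivAt.comp (s, τ) hasFDerivAt_fst
  have hcos1 := (hsnd.const_mul Real.pi).cos
  have hsin1 := (hsnd.const_mul Real.pi).sin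
  have hcos2 := (hsnd.const_mul (2 * Real.pi)).cos
  have hsin2 := (hsnd.const_mul (2 * Real.pi)).sin
  have hnsq := (hasFDerivAt_fst (𝕜 := ℝ) (p := ((s, τ) : EuclideanSpace ℝ (Fin m) × ℝ))).norm_sq
  have hrho := (hasFDerivAt_div_const' (hnsq.sub_const ε) 2).sqrt hne
  have hX := fun i => (hproj i).mul hcos1
  have hY := fun i => ((hproj i).mul hsin1).neg
  have hXn := hrho.mul hcos2
  have hYn := hrho.mul hsin2
  have hZ := hsnd.const_mul (ε * Real.pi)
  -- function equalities
  have hfx : ∀ i : Fin m, (fun q : EuclideanSpace ℝ (Fin m) × ℝ => (ψ q).1 (Fin.castSucc i))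
      = fun q => q.1 i * Real.cos (Real.pi * q.2) := fun i => funext fun q => hψx q.1 q.2 i
  have hfy : ∀ i : Fin m, (fun q : EuclideanSpace ℝ (Fin m) × ℝ => (ψ q).2.1 (Fin.castSucc i))
      = fun q => -(q.1 i * Real.sin (Real.pi * q.2)) := fun i => funext fun q => hψy q.1 q.2 i
  have hfxn : (fun q : EuclideanSpace ℝ (Fin m) × ℝ => (ψ q).1 (Fin.last m))
      = fun q => Real.sqrt ((‖q.1‖ ^ 2 - ε) / 2) * Real.cos (2 * Real.pi * q.2) :=
    funext fun q => hψxn q.1 q.2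
  have hfyn : (fun q : EuclideanSpace ℝ (Fin m) × ℝ => (ψ q).2.1 (Fin.last m))
      = fun q => Real.sqrt ((‖q.1‖ ^ 2 - ε) / 2) * Real.sin (2 * Real.pi * q.2) :=
    funext fun q => hψyn q.1 q.2
  have hfz : (fun q : EuclideanSpace ℝ (Fin m) × ℝ => (ψ q).2.2)
      = fun q => ε * Real.pi * q.2 := funext fun q => hψz q.1 q.2
  -- differentiability of ψ
  have hd1 : DifferentiableAt ℝ (fun q => (ψ q).1) (s, τ) := by
    refine differentiableAt_euclidean.2 fun i => ?_
    refine Fin.lastCases ?_ (fun j => ?_) i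
    · rw [show (fun q : EuclideanSpace ℝ (Fin m) × ℝ => (ψ q).1 (Fin.last m)) = _ from hfxn]
      exact hXn.differentiableAt
    · rw [show (fun q : EuclideanSpace ℝ (Fin m) × ℝ => (ψ q).1 (Fin.castSucc j)) = _ from hfx j]
      exact (hX j).differentiableAt
  have hd2 : DifferentiableAt ℝ (fun q => (ψ q).2.1) (s, τ) := by
    refine differentiableAt_euclidean.2 fun i => ?_
    refine Fin.lastCases ?_ (fun j => ?_) i
    · rw [show (fun q : EuclideanSpace ℝ (Fin m) × ℝ => (ψ q).2.1 (Fin.last m)) = _ from hfyn]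
      exact hYn.differentiableAt
    · rw [show (fun q : EuclideanSpace ℝ (Fin m) × ℝ => (ψ q).2.1 (Fin.castSucc j)) = _ from hfy j]
      exact (hY j).differentiableAt
  have hd3 : DifferentiableAt ℝ (fun q => (ψ q).2.2) (s, τ) := by
    rw [hfz]; exact hZ.differentiableAt
  have hψd : DifferentiableAt ℝ ψ (s, τ) := DifferentiableAt.prodMk hd1 (DifferentiableAt.prodMk hd2 hd3)
  have keyx : ∀ i : Fin m,
      (fderiv ℝ ψ (s, τ) (v, σ)).1 (Fin.castSucc i)
        = s i * (-Real.sin (Real.pi * τ) * (Real.pi * σ)) + Real.cos (Real.pi * τ) * v i := by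
    intro i
    have hL : HasFDerivAt (fun q : EuclideanSpace ℝ (Fin m) × ℝ => (ψ q).1 (Fin.castSucc i))
        (((EuclideanSpace.proj (𝕜 := ℝ) (Fin.castSucc i)).comp
          (ContinuousLinearMap.fst ℝ (EuclideanSpace ℝ (Fin (m+1)))
            (EuclideanSpace ℝ (Fin (m+1)) × ℝ))).comp (fderiv ℝ ψ (s, τ))) (s, τ) :=
      ((EuclideanSpace.proj (𝕜 := ℝ) (Fin.castSucc i)).comp
        (ContinuousLinearMap.fst ℝ (EuclideanSpace ℝ (Fin (m+1)))
          (EuclideanSpace ℝ (Fin (m+1)) × ℝ))).hasFDerivAt.comp (s, τ) hψd.hasFDerivAt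
    rw [hfx i] at hL
    have hu := hL.unique (hX i)
    have h2 : (fderiv ℝ ψ (s, τ) (v, σ)).1 (Fin.castSucc i)
        = (((EuclideanSpace.proj (𝕜 := ℝ) (Fin.castSucc i)).comp
          (ContinuousLinearMap.fst ℝ (EuclideanSpace ℝ (Fin (m+1)))
            (EuclideanSpace ℝ (Fin (m+1)) × ℝ))).comp (fderiv ℝ ψ (s, τ))) (v, σ) := rfl
    rw [h2, hu]
    simp
  have keyy : ∀ i : Fin m,
      (fderiv ℝ ψ (s, τ) (v, σ)).2.1 (Fin.castSucc i)
        = -(s i * (Real.cos (Real.pi * τ) * (Real.pi * σ)) + Real.sin (Real.pi * τ) * v i) := by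
    intro i
    have hL : HasFDerivAt (fun q : EuclideanSpace ℝ (Fin m) × ℝ => (ψ q).2.1 (Fin.castSucc i))
        (((EuclideanSpace.proj (𝕜 := ℝ) (Fin.castSucc i)).comp
          ((ContinuousLinearMap.fst ℝ (EuclideanSpace ℝ (Fin (m+1))) ℝ).comp
            (ContinuousLinearMap.snd ℝ (EuclideanSpace ℝ (Fin (m+1)))
              (EuclideanSpace ℝ (Fin (m+1)) × ℝ)))).comp (fderiv ℝ ψ (s, τ))) (s, τ) :=
      ((EuclideanSpace.proj (𝕜 := ℝ) (Fin.castSucc i)).comp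
        ((ContinuousLinearMap.fst ℝ (EuclideanSpace ℝ (Fin (m+1))) ℝ).comp
          (ContinuousLinearMap.snd ℝ (EuclideanSpace ℝ (Fin (m+1)))
            (EuclideanSpace ℝ (Fin (m+1)) × ℝ)))).hasFDerivAt.comp (s, τ) hψd.hasFDerivAt
    rw [hfy i] at hL
    have hu := hL.unique (hY i)
    have h2 : (fderiv ℝ ψ (s, τ) (v, σ)).2.1 (Fin.castSucc i)
        = (((EuclideanSpace.proj (𝕜 := ℝ) (Fin.castSucc i)).comp
          ((ContinuousLinearMap.fst ℝ (EuclideanSpace ℝ (Fin (m+1))) ℝ).comp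
            (ContinuousLinearMap.snd ℝ (EuclideanSpace ℝ (Fin (m+1)))
              (EuclideanSpace ℝ (Fin (m+1)) × ℝ)))).comp (fderiv ℝ ψ (s, τ))) (v, σ) := rfl
    rw [h2, hu]
    simp
  have keyxn :
      (fderiv ℝ ψ (s, τ) (v, σ)).1 (Fin.last m)
        = Real.sqrt ((‖s‖ ^ 2 - ε) / 2) * (-Real.sin (2 * Real.pi * τ) * (2 * Real.pi * σ))
          + Real.cos (2 * Real.pi * τ)
            * (1 / (2 * Real.sqrt ((‖s‖ ^ 2 - ε) / 2)) * (2 * ⟪s, v⟫ / 2)) := by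
    have hL : HasFDerivAt (fun q : EuclideanSpace ℝ (Fin m) × ℝ => (ψ q).1 (Fin.last m))
        (((EuclideanSpace.proj (𝕜 := ℝ) (Fin.last m)).comp
          (ContinuousLinearMap.fst ℝ (EuclideanSpace ℝ (Fin (m+1)))
            (EuclideanSpace ℝ (Fin (m+1)) × ℝ))).comp (fderiv ℝ ψ (s, τ))) (s, τ) :=
      ((EuclideanSpace.proj (𝕜 := ℝ) (Fin.last m)).comp
        (ContinuousLinearMap.fst ℝ (EuclideanSpace ℝ (Fin (m+1)))
          (EuclideanSpace ℝ (Fin (m+1)) × ℝ))).hasFDerivAt.comp (s, τ) hψd.hasFDerivAt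
    rw [hfxn] at hL
    have hu := hL.unique hXn
    have h2 : (fderiv ℝ ψ (s, τ) (v, σ)).1 (Fin.last m)
        = (((EuclideanSpace.proj (𝕜 := ℝ) (Fin.last m)).comp
          (ContinuousLinearMap.fst ℝ (EuclideanSpace ℝ (Fin (m+1)))
            (EuclideanSpace ℝ (Fin (m+1)) × ℝ))).comp (fderiv ℝ ψ (s, τ))) (v, σ) := rfl
    rw [h2, hu]
    simp
  have keyyn :
      (fderiv ℝ ψ (s, τ) (v, σ)).2.1 (Fin.last m)
        = Real.sqrt ((‖s‖ ^ 2 - ε) / 2) * (Real.cos (2 * Real.pi * τ) * (2 * Real.pi * σ))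
          + Real.sin (2 * Real.pi * τ)
            * (1 / (2 * Real.sqrt ((‖s‖ ^ 2 - ε) / 2)) * (2 * ⟪s, v⟫ / 2)) := by
    have hL : HasFDerivAt (fun q : EuclideanSpace ℝ (Fin m) × ℝ => (ψ q).2.1 (Fin.last m))
        (((EuclideanSpace.proj (𝕜 := ℝ) (Fin.last m)).comp
          ((ContinuousLinearMap.fst ℝ (EuclideanSpace ℝ (Fin (m+1))) ℝ).comp
            (ContinuousLinearMap.snd ℝ (EuclideanSpace ℝ (Fin (m+1)))
              (EuclideanSpace ℝ (Fin (m+1)) × ℝ)))).comp (fderiv ℝ ψ (s, τ))) (s, τ) :=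
      ((EuclideanSpace.proj (𝕜 := ℝ) (Fin.last m)).comp
        ((ContinuousLinearMap.fst ℝ (EuclideanSpace ℝ (Fin (m+1))) ℝ).comp
          (ContinuousLinearMap.snd ℝ (EuclideanSpace ℝ (Fin (m+1)))
            (EuclideanSpace ℝ (Fin (m+1)) × ℝ)))).hasFDerivAt.comp (s, τ) hψd.hasFDerivAt
    rw [hfyn] at hL
    have hu := hL.unique hYn
    have h2 : (fderiv ℝ ψ (s, τ) (v, σ)).2.1 (Fin.last m)
        = (((EuclideanSpace.proj (𝕜 := ℝ) (Fin.last m)).comp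
          ((ContinuousLinearMap.fst ℝ (EuclideanSpace ℝ (Fin (m+1))) ℝ).comp
            (ContinuousLinearMap.snd ℝ (EuclideanSpace ℝ (Fin (m+1)))
              (EuclideanSpace ℝ (Fin (m+1)) × ℝ)))).comp (fderiv ℝ ψ (s, τ))) (v, σ) := rfl
    rw [h2, hu]
    simp
  have keyz : (fderiv ℝ ψ (s, τ) (v, σ)).2.2 = ε * Real.pi * σ := by
    have hL : HasFDerivAt (fun q : EuclideanSpace ℝ (Fin m) × ℝ => (ψ q).2.2)
        (((ContinuousLinearMap.snd ℝ (EuclideanSpace ℝ (Fin (m+1))) ℝ).comp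
          (ContinuousLinearMap.snd ℝ (EuclideanSpace ℝ (Fin (m+1)))
            (EuclideanSpace ℝ (Fin (m+1)) × ℝ))).comp (fderiv ℝ ψ (s, τ))) (s, τ) :=
      ((ContinuousLinearMap.snd ℝ (EuclideanSpace ℝ (Fin (m+1))) ℝ).comp
        (ContinuousLinearMap.snd ℝ (EuclideanSpace ℝ (Fin (m+1)))
          (EuclideanSpace ℝ (Fin (m+1)) × ℝ))).hasFDerivAt.comp (s, τ) hψd.hasFDerivAt
    rw [hfz] at hL
    have hu := hL.unique hZ
    have h2 : (fderiv ℝ ψ (s, τ) (v, σ)).2.2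
        = (((ContinuousLinearMap.snd ℝ (EuclideanSpace ℝ (Fin (m+1))) ℝ).comp
          (ContinuousLinearMap.snd ℝ (EuclideanSpace ℝ (Fin (m+1)))
            (EuclideanSpace ℝ (Fin (m+1)) × ℝ))).comp (fderiv ℝ ψ (s, τ))) (v, σ) := rfl
    rw [h2, hu]
    simp [mul_assoc]
  have hnorm : ‖s‖ ^ 2 = ∑ i, s i ^ 2 := by
    rw [EuclideanSpace.norm_eq, Real.sq_sqrt (Finset.sum_nonneg fun i _ => sq_nonneg _)]
    exact Finset.sum_congr rfl fun i _ => by rw [Real.norm_eq_abs, sq_abs]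
  have hr : Real.sqrt ((‖s‖ ^ 2 - ε) / 2) ^ 2 = (‖s‖ ^ 2 - ε) / 2 := Real.sq_sqrt h0.le
  have h2 := Real.sin_sq_add_cos_sq (2 * Real.pi * τ)
  rw [Fin.sum_univ_castSucc, keyz, hψxn, hψyn, keyxn, keyyn]
  have hsum : ∑ i : Fin m,
      ((ψ (s, τ)).1 (Fin.castSucc i) * (fderiv ℝ ψ (s, τ) (v, σ)).2.1 (Fin.castSucc i)
        - (ψ (s, τ)).2.1 (Fin.castSucc i) * (fderiv ℝ ψ (s, τ) (v, σ)).1 (Fin.castSucc i))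
      = -(Real.pi * σ) * ‖s‖ ^ 2 := by
    rw [hnorm, Finset.mul_sum]
    refine Finset.sum_congr rfl fun i _ => ?_
    rw [hψx, hψy, keyx i, keyy i]
    have h1 := Real.sin_sq_add_cos_sq (Real.pi * τ)
    linear_combination (-(Real.pi * σ) * s i ^ 2) * h1
  rw [hsum]
  linear_combination (2 * Real.pi * σ * (Real.cos (2 * Real.pi * τ) ^ 2
      + Real.sin (2 * Real.pi * τ) ^ 2)) * hr + (Real.pi * σ * (‖s‖ ^ 2 - ε)) * h2
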